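/- The complete graph K_16 can be partitioned into five edge-disjoint subgraphs, each isomorphic to the 4-by-4 grid graph P_4 □ P_4. -/

import Mathlib

open SimpleGraph

def Elist : Fin 5 → List (Fin 16 × Fin 16) :=
  ![[(0,1), (0,6), (0,11), (1,9), (2,4), (2,6), (3,8), (3,10), (3,11), (3,15), (4,5), (4,13), (5,6), (5,11), (5,15), (7,10), (7,12), (7,15), (8,9), (8,14), (9,11), (10,14), (12,13), (13,15)],
    [(0,2), (0,7), (0,12), (1,5), (1,7), (1,11), (1,12), (2,10), (3,5), (3,7), (4,6), (4,9), (4,11), (4,12), (5,14), (6,8), (6,15), (8,11), (8,13), (9,10), (9,15), (10,12), (11,14), (13,14)],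
    [(0,3), (0,8), (0,13), (1,2), (1,4), (1,15), (2,8), (2,12), (2,13), (3,6), (4,8), (5,7), (5,10), (5,12), (5,13), (6,10), (6,13), (7,9), (7,11), (9,12), (9,14), (10,11), (12,15), (14,15)],
    [(0,4), (0,9), (0,14), (1,6), (1,8), (1,13), (1,14), (2,3), (2,5), (2,11), (3,9), (3,13), (3,14), (4,7), (5,9), (6,7), (6,12), (7,14), (8,10), (8,12), (10,13), (10,15), (11,13), (11,15)],
    [(0,5), (0,10), (0,15), (1,3), (1,10), (2,7), (2,9), (2,14), (2,15), (3,4), (3,12), (4,10), (4,14), (4,15), (5,8), (6,9), (6,11), (6,14), (7,8), (7,13), (8,15), (9,13), (11,12), (12,14)]]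

def adjB (i : Fin 5) (a b : Fin 16) : Bool :=
  (Elist i).any fun p => (p.1 == a && p.2 == b) || (p.1 == b && p.2 == a)

lemma adjB_symm : ∀ (i : Fin 5) (a b : Fin 16), adjB i a b = adjB i b a := by decide

lemma adjB_irrefl : ∀ (i : Fin 5) (a : Fin 16), adjB i a a = false := by decide

def G (i : Fin 5) : SimpleGraph (Fin 16) where
  Adj a b := adjB i a b
  symm := ⟨fun a b h => by
    have h' : adjB i a b = true := h
    rw [adjB_symm] at h'; exact h'⟩
  loopless := ⟨fun a h => by
    have h' : adjB i a a = true := h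
    rw [adjB_irrefl] at h'; cases h'⟩

instance (i : Fin 5) : DecidableRel (G i).Adj :=
  fun a b => inferInstanceAs (Decidable (adjB i a b = true))

def Fwd : Fin 5 → Fin 16 → Fin 16 :=
  ![![1, 0, 6, 2, 9, 11, 5, 4, 8, 3, 15, 13, 14, 10, 7, 12],
    ![2, 0, 7, 3, 10, 12, 1, 5, 9, 4, 11, 14, 15, 6, 8, 13],
    ![3, 0, 8, 4, 6, 13, 2, 1, 10, 5, 12, 15, 11, 7, 9, 14],
    ![4, 0, 9, 5, 7, 14, 3, 2, 6, 1, 13, 11, 12, 8, 10, 15],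
    ![5, 0, 10, 1, 8, 15, 4, 3, 7, 2, 14, 12, 13, 9, 6, 11]]

def InvT : Fin 5 → Fin 16 → Fin 16 :=
  ![![1, 0, 3, 9, 7, 6, 2, 14, 8, 4, 13, 5, 15, 11, 12, 10],
    ![1, 6, 0, 3, 9, 7, 13, 2, 14, 8, 4, 10, 5, 15, 11, 12],
    ![1, 7, 6, 0, 3, 9, 4, 13, 2, 14, 8, 12, 10, 5, 15, 11],
    ![1, 9, 7, 6, 0, 3, 8, 4, 13, 2, 14, 11, 12, 10, 5, 15],
    ![1, 3, 9, 7, 6, 0, 14, 8, 4, 13, 2, 15, 11, 12, 10, 5]]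

lemma fwd_inv : ∀ (i : Fin 5) (v : Fin 16), Fwd i (InvT i v) = v := by decide

lemma inv_fwd : ∀ (i : Fin 5) (v : Fin 16), InvT i (Fwd i v) = v := by decide

def pEquiv (i : Fin 5) : Fin 16 ≃ Fin 16 where
  toFun := InvT i
  invFun := Fwd i
  left_inv := fwd_inv i
  right_inv := inv_fwd i

def eqv (i : Fin 5) : Fin 16 ≃ Fin 4 × Fin 4 :=
  (pEquiv i).trans (finProdFinEquiv (m := 4) (n := 4)).symm

instance : DecidableRel (pathGraph 4).Adj :=
  fun _ _ => decidable_of_iff _ pathGraph_adj.symm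

instance : DecidableRel (pathGraph 4 □ pathGraph 4).Adj :=
  fun _ _ => decidable_of_iff _ boxProd_adj.symm

lemma key : ∀ (i : Fin 5) (a b : Fin 16),
    (pathGraph 4 □ pathGraph 4).Adj (eqv i a) (eqv i b) ↔ (G i).Adj a b := by
  decide

def iso (i : Fin 5) : G i ≃g (pathGraph 4 □ pathGraph 4) :=
  ⟨eqv i, fun {a b} => key i a b⟩

lemma pairKey : ∀ (i j : Fin 5), i ≠ j → ∀ a b : Fin 16,
    ¬((G i).Adj a b ∧ (G j).Adj a b) := by decide

lemma covKey : ∀ a b : Fin 16, (∃ i, (G i).Adj a b) ↔ a ≠ b := by decide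

theorem K16_grid_design :
    ∃ f : Fin 5 → SimpleGraph (Fin 16),
      (∀ i, Nonempty (f i ≃g (pathGraph 4 □ pathGraph 4))) ∧
      (Pairwise fun i j => Disjoint (f i) (f j)) ∧
      (⨆ i, f i) = ⊤ := by
  refine ⟨G, fun i => ⟨iso i⟩, ?_, ?_⟩
  · intro i j hij
    rw [disjoint_iff]
    ext a b
    simp only [SimpleGraph.inf_adj, SimpleGraph.bot_adj, iff_false]
    exact pairKey i j hij a b
  · ext a b
    simp only [SimpleGraph.iSup_adj, SimpleGraph.top_adj]
    exact covKey a b
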